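/- Let N ≥ 1, let w ≥ 2 be even, let m, n be integers with 0 ≤ m ≤ w and 1 ≤ n ≤ w−1, and set m̃ = w−m, ñ = w−n. Let D > 1 and let h be an integer with gcd(Nh, D) = 1, and let v be an integer with N·h·v ≡ −1 (mod D). Then r_{m,h/D}(R_n) = (−1)^{n+m}·N^{ñ−m}·D^{m̃−m}·r_{m̃,v/D}(R_{ñ}), where for a cusp form f of weight w+2 on Γ₀(N), r_{m,h/D}(f) = ∫₀^{i∞} f(z + h/D)·z^m dz, and R_n(z) = c_n^{−1}·Σ_{(a b; c d) ∈ Γ₀(N)} 1/((az+b)^{ñ+1}(cz+d)^{n+1}) with c_n = (−1)^n·4πi·(2i)^{−w−1}·C(w,n). -/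

import Mathlib

open MeasureTheory Complex Real

noncomputable section

/-- The constant `c_n = (−1)^n·4πi·(2i)^{−w−1}·C(w,n)`. -/
def cconst (w n : ℕ) : ℂ :=
  (-1) ^ n * 4 * Real.pi * Complex.I * (2 * Complex.I) ^ (-(w : ℤ) - 1) * (w.choose n)

/-- `R_n(z) = c_n^{−1} Σ_{(a b; c d) ∈ Γ₀(N)} 1/((az+b)^{ñ+1}(cz+d)^{n+1})`. -/
def Rq (N w n : ℕ) (z : ℂ) : ℂ :=
  (cconst w n)⁻¹ * ∑' p : {p : ℤ × ℤ × ℤ × ℤ //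
      p.1 * p.2.2.2 - p.2.1 * p.2.2.1 = 1 ∧ (N : ℤ) ∣ p.2.2.1},
    1 / (((p.1.1 : ℂ) * z + (p.1.2.1 : ℂ)) ^ (w - n + 1) *
        ((p.1.2.2.1 : ℂ) * z + (p.1.2.2.2 : ℂ)) ^ (n + 1))

/-- The shifted period `r_{m,α/D}(f) = ∫₀^{i∞} f(z + α/D)·z^m dz` along the positive
imaginary axis. -/
def rshift (D : ℕ) (m : ℕ) (α : ℤ) (f : ℂ → ℂ) : ℂ :=
  Complex.I * ∫ y in Set.Ioi (0 : ℝ),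
    f (Complex.I * y + (α : ℂ) / D) * (Complex.I * y) ^ m

abbrev Idx (N : ℕ) := {p : ℤ × ℤ × ℤ × ℤ //
      p.1 * p.2.2.2 - p.2.1 * p.2.2.1 = 1 ∧ (N : ℤ) ∣ p.2.2.1}

section EquivPart
variable (N D : ℕ) (h v k : ℤ)

def fFun (p : ℤ × ℤ × ℤ × ℤ) : ℤ × ℤ × ℤ × ℤ :=
  (-(p.2.2.1 * h + p.2.2.2 * D), (p.2.2.1 / N) * k + p.2.2.2 * v,
    N * (p.1 * h + p.2.1 * D), -(p.1 * k + p.2.1 * (N * v)))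

def gFun (q : ℤ × ℤ × ℤ × ℤ) : ℤ × ℤ × ℤ × ℤ :=
  (-(v * q.2.2.1) - D * q.2.2.2, k * (q.2.2.1 / N) + h * q.2.2.2,
    N * (v * q.1 + D * q.2.1), -(k * q.1) - N * h * q.2.1)

theorem fFun_mem (hN : (N : ℤ) ≠ 0) (hk : (D : ℤ) * k - N * h * v = 1)
    (p : ℤ × ℤ × ℤ × ℤ) (hp : p.1 * p.2.2.2 - p.2.1 * p.2.2.1 = 1 ∧ (N : ℤ) ∣ p.2.2.1) :
    (fFun N D h v k p).1 * (fFun N D h v k p).2.2.2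
      - (fFun N D h v k p).2.1 * (fFun N D h v k p).2.2.1 = 1 ∧
      (N : ℤ) ∣ (fFun N D h v k p).2.2.1 := by
  obtain ⟨a, b, c, d⟩ := p
  obtain ⟨hdet, c₀, rfl⟩ := hp
  refine ⟨?_, ⟨a * h + b * D, rfl⟩⟩
  simp only [fFun, Int.mul_ediv_cancel_left _ hN]
  linear_combination ((D : ℤ) * k - N * h * v) * hdet + hk

theorem gFun_mem (hN : (N : ℤ) ≠ 0) (hk : (D : ℤ) * k - N * h * v = 1)
    (q : ℤ × ℤ × ℤ × ℤ) (hq : q.1 * q.2.2.2 - q.2.1 * q.2.2.1 = 1 ∧ (N : ℤ) ∣ q.2.2.1) :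
    (gFun N D h v k q).1 * (gFun N D h v k q).2.2.2
      - (gFun N D h v k q).2.1 * (gFun N D h v k q).2.2.1 = 1 ∧
      (N : ℤ) ∣ (gFun N D h v k q).2.2.1 := by
  obtain ⟨a, b, c, d⟩ := q
  obtain ⟨hdet, c₀, rfl⟩ := hq
  refine ⟨?_, ⟨v * a + D * b, rfl⟩⟩
  simp only [gFun, Int.mul_ediv_cancel_left _ hN]
  linear_combination ((D : ℤ) * k - N * h * v) * hdet + hk

theorem gFun_fFun (hN : (N : ℤ) ≠ 0) (hk : (D : ℤ) * k - N * h * v = 1)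
    (p : ℤ × ℤ × ℤ × ℤ) (hp : (N : ℤ) ∣ p.2.2.1) :
    gFun N D h v k (fFun N D h v k p) = p := by
  obtain ⟨a, b, c, d⟩ := p
  obtain ⟨c₀, rfl⟩ := hp
  simp only [fFun, gFun, Int.mul_ediv_cancel_left _ hN, Prod.mk.injEq]
  refine ⟨by linear_combination a * hk, by linear_combination b * hk,
    by linear_combination (N : ℤ) * c₀ * hk, by linear_combination d * hk⟩

theorem fFun_gFun (hN : (N : ℤ) ≠ 0) (hk : (D : ℤ) * k - N * h * v = 1)
    (q : ℤ × ℤ × ℤ × ℤ) (hq : (N : ℤ) ∣ q.2.2.1) :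
    fFun N D h v k (gFun N D h v k q) = q := by
  obtain ⟨a, b, c, d⟩ := q
  obtain ⟨c₀, rfl⟩ := hq
  simp only [fFun, gFun, Int.mul_ediv_cancel_left _ hN, Prod.mk.injEq]
  exact ⟨by linear_combination a * hk, by linear_combination b * hk,
    by linear_combination (N : ℤ) * c₀ * hk, by linear_combination d * hk⟩

def frickeEquiv (hN : (N : ℤ) ≠ 0) (hk : (D : ℤ) * k - N * h * v = 1) : Idx N ≃ Idx N where
  toFun p := ⟨fFun N D h v k p.1, fFun_mem N D h v k hN hk p.1 p.2⟩
  invFun q := ⟨gFun N D h v k q.1, gFun_mem N D h v k hN hk q.1 q.2⟩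
  left_inv p := Subtype.ext (gFun_fFun N D h v k hN hk p.1 p.2.2)
  right_inv q := Subtype.ext (fFun_gFun N D h v k hN hk q.1 q.2.2)

end EquivPart

theorem mulform1 (N D a b h v k u : ℂ)
    (hN : N ≠ 0) (hD : D ≠ 0) (hu : u ≠ 0)
    (hk : D * k - N * h * v = 1) :
    (a * (h / D - 1 / (N * D ^ 2 * u)) + b) * (N * D * u) =
      N * (a * h + b * D) * (u + v / D) + -(a * k + b * (N * v)) := by
  have hP : N * D ^ 2 * u ≠ 0 :=
    mul_ne_zero (mul_ne_zero hN (pow_ne_zero 2 hD)) hu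
  rw [div_sub_div _ _ hD hP]
  field_simp
  linear_combination a * hk

theorem mulform2 (N D c d h v k c₀ u : ℂ)
    (hN : N ≠ 0) (hD : D ≠ 0) (hu : u ≠ 0)
    (hk : D * k - N * h * v = 1) (hc : c = N * c₀) :
    (c * (h / D - 1 / (N * D ^ 2 * u)) + d) * (D * u) =
      -(-(c * h + d * D) * (u + v / D) + (c₀ * k + d * v)) := by
  subst hc
  have hP : N * D ^ 2 * u ≠ 0 :=
    mul_ne_zero (mul_ne_zero hN (pow_ne_zero 2 hD)) hu
  rw [div_sub_div _ _ hD hP]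
  field_simp
  linear_combination c₀ * hk

theorem pow_aux (α β : ℕ) (N D u X Y : ℂ)
    (hN : N ≠ 0) (hD : D ≠ 0) (hu : u ≠ 0) (hX : X ≠ 0) (hY : Y ≠ 0) :
    1 / ((X / (N * D * u)) ^ α * (-Y / (D * u)) ^ β) =
      (-1 : ℂ) ^ β * N ^ α * ((D * u) ^ α * (D * u) ^ β) * (1 / (Y ^ β * X ^ α)) := by
  rw [div_pow, div_pow, neg_pow]
  field_simp
  ring_nf
  rw [show ((-1:ℂ))^(β*2) = 1 by rw [mul_comm, pow_mul, neg_one_sq, one_pow], mul_one]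

set_option maxHeartbeats 4000000 in
theorem term_transform (w n : ℕ) (hn : n ≤ w) (N D a b c d h v k c₀ u : ℂ)
    (hN : N ≠ 0) (hD : D ≠ 0) (hu : u ≠ 0)
    (hk : D * k - N * h * v = 1) (hc : c = N * c₀) :
    1 / ((a * (h / D - 1 / (N * D ^ 2 * u)) + b) ^ (w - n + 1) *
         (c * (h / D - 1 / (N * D ^ 2 * u)) + d) ^ (n + 1)) =
    (-1 : ℂ) ^ (n + 1) * N ^ (w - n + 1) * (D * u) ^ (w + 2) *
    (1 / ((-(c * h + d * D) * (u + v / D) + (c₀ * k + d * v)) ^ (n + 1) *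
          (N * (a * h + b * D) * (u + v / D) + -(a * k + b * (N * v))) ^ (w - n + 1))) := by
  have hNDu : N * D * u ≠ 0 := mul_ne_zero (mul_ne_zero hN hD) hu
  have hDu : D * u ≠ 0 := mul_ne_zero hD hu
  have e1 : a * (h / D - 1 / (N * D ^ 2 * u)) + b =
      (N * (a * h + b * D) * (u + v / D) + -(a * k + b * (N * v))) / (N * D * u) :=
    eq_div_of_mul_eq hNDu (mulform1 N D a b h v k u hN hD hu hk)
  have e2 : c * (h / D - 1 / (N * D ^ 2 * u)) + d =
      -(-(c * h + d * D) * (u + v / D) + (c₀ * k + d * v)) / (D * u) :=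
    eq_div_of_mul_eq hDu (mulform2 N D c d h v k c₀ u hN hD hu hk hc)
  rw [e1, e2]
  generalize (N * (a * h + b * D) * (u + v / D) + -(a * k + b * (N * v))) = X
  generalize (-(c * h + d * D) * (u + v / D) + (c₀ * k + d * v)) = Y
  by_cases hX0 : X = 0
  · simp [hX0, zero_pow, Nat.succ_ne_zero]
  by_cases hY0 : Y = 0
  · simp [hY0, zero_pow, Nat.succ_ne_zero]
  rw [show (D*u)^(w+2) = (D*u)^(w-n+1) * (D*u)^(n+1) from by rw [← pow_add]; congr 1; omega]
  exact pow_aux (w - n + 1) (n + 1) N D u X Y hN hD hu hX0 hY0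

theorem cconst_symm (w n : ℕ) (hwe : Even w) (hn : n ≤ w) : cconst w (w - n) = cconst w n := by
  unfold cconst
  rw [Nat.choose_symm hn]
  have h2 : (-1 : ℂ) ^ n * (-1 : ℂ) ^ n = 1 := by
    rw [← pow_add]; exact Even.neg_one_pow ⟨n, rfl⟩
  have h1 : (-1 : ℂ) ^ (w - n) * (-1 : ℂ) ^ n = 1 := by
    rw [← pow_add, Nat.sub_add_cancel hn]; exact Even.neg_one_pow hwe
  have hpow : (-1 : ℂ) ^ (w - n) = (-1 : ℂ) ^ n := by
    calc (-1 : ℂ) ^ (w - n) = (-1 : ℂ) ^ (w - n) * ((-1 : ℂ) ^ n * (-1 : ℂ) ^ n) := by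
          rw [h2, mul_one]
      _ = ((-1 : ℂ) ^ (w - n) * (-1 : ℂ) ^ n) * (-1 : ℂ) ^ n := by ring
      _ = (-1 : ℂ) ^ n := by rw [h1, one_mul]
  rw [hpow]

theorem Rq_transform (N D w n : ℕ) (hN0 : N ≠ 0) (hD0 : D ≠ 0) (hn : n ≤ w) (hwe : Even w)
    (h v k : ℤ) (hk : (D : ℤ) * k - N * h * v = 1) (u : ℂ) (hu : u ≠ 0) :
    Rq N w n ((h : ℂ) / D - 1 / (N * D ^ 2 * u)) =
      (-1 : ℂ) ^ (n + 1) * (N : ℂ) ^ (w - n + 1) * ((D : ℂ) * u) ^ (w + 2) *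
        Rq N w (w - n) (u + (v : ℂ) / D) := by
  have hNZ : (N : ℤ) ≠ 0 := Int.natCast_ne_zero.mpr hN0
  have hNC : (N : ℂ) ≠ 0 := Nat.cast_ne_zero.mpr hN0
  have hDC : (D : ℂ) ≠ 0 := Nat.cast_ne_zero.mpr hD0
  have hkC : (D : ℂ) * (k : ℂ) - (N : ℂ) * (h : ℂ) * (v : ℂ) = 1 := by
    exact_mod_cast congrArg (fun z : ℤ => (z : ℂ)) hk
  unfold Rq
  rw [cconst_symm w n hwe hn]
  simp only [Nat.sub_sub_self hn]
  set e := frickeEquiv N D h v k hNZ hk with he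
  set s : Idx N → ℂ := fun q =>
    1 / (((q.1.1 : ℂ) * (u + (v : ℂ) / D) + (q.1.2.1 : ℂ)) ^ (n + 1) *
      ((q.1.2.2.1 : ℂ) * (u + (v : ℂ) / D) + (q.1.2.2.2 : ℂ)) ^ (w - n + 1)) with hs
  have key : ∀ p : Idx N,
      1 / (((p.1.1 : ℂ) * ((h : ℂ) / D - 1 / (N * D ^ 2 * u)) + (p.1.2.1 : ℂ)) ^ (w - n + 1) *
        ((p.1.2.2.1 : ℂ) * ((h : ℂ) / D - 1 / (N * D ^ 2 * u)) + (p.1.2.2.2 : ℂ)) ^ (n + 1)) =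
      (-1 : ℂ) ^ (n + 1) * (N : ℂ) ^ (w - n + 1) * ((D : ℂ) * u) ^ (w + 2) * s (e p) := by
    rintro ⟨⟨a, b, c, d⟩, hdet, hdvd⟩
    have hc : c = (N : ℤ) * (c / N) := (Int.mul_ediv_cancel' hdvd).symm
    have hcC : (c : ℂ) = (N : ℂ) * ((c / N : ℤ) : ℂ) := by
      conv_lhs => rw [hc]
      push_cast
      ring
    simp only [hs, he, frickeEquiv, fFun, Equiv.coe_fn_mk]
    push_cast
    exact term_transform w n hn (N : ℂ) (D : ℂ) (a : ℂ) (b : ℂ) (c : ℂ) (d : ℂ)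
      (h : ℂ) (v : ℂ) (k : ℂ) ((c / N : ℤ) : ℂ) u hNC hDC hu hkC hcC
  rw [tsum_congr key, tsum_mul_left, e.tsum_eq s]
  ring

theorem scalar_id (w n m : ℕ) (hn : n ≤ w) (hm : m ≤ w) (X Dc J R : ℂ)
    (hX : X ≠ 0) (hD : Dc ≠ 0) (hJ : J ≠ 0) :
    (X * Dc ^ 2)⁻¹ * (-(J ^ 2))⁻¹ *
      ((-1) ^ (n + 1) * X ^ (w - n + 1) * (Dc * J) ^ (w + 2) * R * (-(X * Dc ^ 2)⁻¹ * J⁻¹) ^ m)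
    = (-1) ^ (n + m) * X ^ ((w : ℤ) - n - m) * Dc ^ ((w : ℤ) - m - m) * (R * J ^ (w - m)) := by
  rw [zpow_sub₀ hX, zpow_sub₀ hX, zpow_sub₀ hD, zpow_sub₀ hD]
  simp only [zpow_natCast]
  rw [show X ^ (w - n + 1) = X ^ w * (X ^ n)⁻¹ * X from by
    rw [pow_succ, _root_.pow_sub₀ _ hX hn]]
  rw [show J ^ (w - m) = J ^ w * (J ^ m)⁻¹ from _root_.pow_sub₀ _ hJ hm]
  rw [show (Dc * J) ^ (w + 2) = Dc ^ w * Dc ^ 2 * (J ^ w * J ^ 2) from by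
    rw [mul_pow, pow_add, pow_add]]
  rw [show (-(X * Dc ^ 2)⁻¹ * J⁻¹) ^ m =
      (-1 : ℂ) ^ m * ((X ^ m * (Dc ^ m) ^ 2)⁻¹ * (J ^ m)⁻¹) from by
    rw [← pow_mul, mul_comm m 2, pow_mul, ← mul_pow, ← inv_pow, ← inv_pow, ← mul_pow, ← mul_pow]
    ring]
  have c1 : X * X⁻¹ = 1 := mul_inv_cancel₀ hX
  have c2 : Dc ^ 2 * Dc⁻¹ ^ 2 = 1 := by
    rw [inv_pow, mul_inv_cancel₀ (pow_ne_zero 2 hD)]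
  have c3 : J ^ 2 * J⁻¹ ^ 2 = 1 := by
    rw [inv_pow, mul_inv_cancel₀ (pow_ne_zero 2 hJ)]
  linear_combination
    (((-1 : ℂ) ^ (n + m) * (X ^ w / X ^ n / X ^ m) * (Dc ^ w / Dc ^ m / Dc ^ m) *
        (R * (J ^ w * (J ^ m)⁻¹))) * Dc ^ 2 * Dc⁻¹ ^ 2 * J ^ 2 * J⁻¹ ^ 2) * c1 +
    (((-1 : ℂ) ^ (n + m) * (X ^ w / X ^ n / X ^ m) * (Dc ^ w / Dc ^ m / Dc ^ m) *
        (R * (J ^ w * (J ^ m)⁻¹))) * J ^ 2 * J⁻¹ ^ 2) * c2 +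
    ((-1 : ℂ) ^ (n + m) * (X ^ w / X ^ n / X ^ m) * (Dc ^ w / Dc ^ m / Dc ^ m) *
        (R * (J ^ w * (J ^ m)⁻¹))) * c3

/-- for `gcd(Nh, D) = 1` and `Nhv ≡ −1 (mod D)`,
`r_{m,h/D}(R_n) = (−1)^{n+m}·N^{ñ−m}·D^{m̃−m}·r_{m̃,v/D}(R_ñ)`. -/
theorem rshift_Rn_functional_equation (N : ℕ) (hN : 1 ≤ N) (w : ℕ) (hw : 2 ≤ w)
    (hwe : Even w) (m n : ℕ) (hm : m ≤ w) (hn1 : 1 ≤ n) (hnw : n ≤ w - 1)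
    (D : ℕ) (hD : 1 < D) (h : ℤ) (hh : Int.gcd ((N : ℤ) * h) D = 1)
    (v : ℤ) (hv : (D : ℤ) ∣ ((N : ℤ) * h * v + 1)) :
    rshift D m h (Rq N w n) =
      (-1) ^ (n + m) * (N : ℂ) ^ ((w : ℤ) - n - m) * (D : ℂ) ^ ((w : ℤ) - m - m) *
        rshift D (w - m) v (Rq N w (w - n)) := by
  have hN0 : N ≠ 0 := by omega
  have hD0 : D ≠ 0 := by omega
  have hn : n ≤ w := by omega
  have hNC : (N : ℂ) ≠ 0 := Nat.cast_ne_zero.mpr hN0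
  have hDC : (D : ℂ) ≠ 0 := Nat.cast_ne_zero.mpr hD0
  obtain ⟨k, hk0⟩ := hv
  have hk : (D : ℤ) * k - N * h * v = 1 := by linear_combination -hk0
  set K : ℝ := (N : ℝ) * (D : ℝ) ^ 2 with hKdef
  have hKpos : 0 < K := by
    have : 0 < (N : ℝ) := by exact_mod_cast Nat.pos_of_ne_zero hN0
    have h2 : 0 < (D : ℝ) := by exact_mod_cast Nat.pos_of_ne_zero hD0
    positivity
  have himg : (fun t : ℝ => K⁻¹ * t⁻¹) '' Set.Ioi 0 = Set.Ioi 0 := by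
    ext y
    constructor
    · rintro ⟨t, ht, rfl⟩
      exact mul_pos (inv_pos.mpr hKpos) (inv_pos.mpr ht)
    · intro hy
      refine ⟨K⁻¹ * y⁻¹, mul_pos (inv_pos.mpr hKpos) (inv_pos.mpr hy), ?_⟩
      field_simp
  have hder : ∀ t ∈ Set.Ioi (0 : ℝ), HasDerivWithinAt (fun t : ℝ => K⁻¹ * t⁻¹)
      (K⁻¹ * (-(t ^ 2)⁻¹)) (Set.Ioi 0) t :=
    fun t ht => ((hasDerivAt_inv (ne_of_gt ht)).const_mul K⁻¹).hasDerivWithinAt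
  have hinj : Set.InjOn (fun t : ℝ => K⁻¹ * t⁻¹) (Set.Ioi 0) := by
    intro x hx y hy hxy
    exact inv_injective (mul_left_cancel₀ (inv_ne_zero (ne_of_gt hKpos)) hxy)
  unfold rshift
  conv_lhs => rw [show Set.Ioi (0:ℝ) = (fun t : ℝ => K⁻¹ * t⁻¹) '' Set.Ioi 0 from himg.symm]
  rw [integral_image_eq_integral_abs_deriv_smul measurableSet_Ioi hder hinj]
  rw [setIntegral_congr_fun measurableSet_Ioi (g := fun t : ℝ =>
      ((-1 : ℂ) ^ (n + m) * (N : ℂ) ^ ((w : ℤ) - n - m) * (D : ℂ) ^ ((w : ℤ) - m - m)) *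
        (Rq N w (w - n) (Complex.I * t + (v : ℂ) / D) * (Complex.I * t) ^ (w - m)))
      (fun t ht => ?_)]
  · rw [integral_const_mul]
    ring
  · have ht0 : (0 : ℝ) < t := ht
    have htR : (t : ℝ) ≠ 0 := ne_of_gt ht0
    have htC : (t : ℂ) ≠ 0 := by exact_mod_cast htR
    have hIt : Complex.I * (t : ℂ) ≠ 0 := mul_ne_zero Complex.I_ne_zero htC
    have hKC : ((K : ℝ) : ℂ) = (N : ℂ) * (D : ℂ) ^ 2 := by rw [hKdef]; push_cast; ring
    show _ = (-1 : ℂ) ^ (n + m) * (N : ℂ) ^ ((w : ℤ) - n - m) * (D : ℂ) ^ ((w : ℤ) - m - m) *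
      (Rq N w (w - n) (Complex.I * t + (v : ℂ) / D) * (Complex.I * t) ^ (w - m))
    have harg : Complex.I * ((K⁻¹ * t⁻¹ : ℝ) : ℂ) + (h : ℂ) / D =
        (h : ℂ) / D - 1 / ((N : ℂ) * (D : ℂ) ^ 2 * (Complex.I * (t : ℂ))) := by
      push_cast [hKdef]
      have h3 : (Complex.I * (t : ℂ))⁻¹ = -Complex.I * (t : ℂ)⁻¹ := by
        rw [mul_inv, Complex.inv_I]
      rw [one_div, mul_inv ((N : ℂ) * (D : ℂ) ^ 2) (Complex.I * (t : ℂ)), h3]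
      ring
    have hIz : Complex.I * ((K⁻¹ * t⁻¹ : ℝ) : ℂ) =
        -((N : ℂ) * (D : ℂ) ^ 2)⁻¹ * (Complex.I * (t : ℂ))⁻¹ := by
      push_cast [hKdef]
      have h3 : (Complex.I * (t : ℂ))⁻¹ = -Complex.I * (t : ℂ)⁻¹ := by
        rw [mul_inv, Complex.inv_I]
      rw [h3]
      ring
    rw [harg, Rq_transform N D w n hN0 hD0 hn hwe h v k hk (Complex.I * t) hIt, hIz]
    rw [show |K⁻¹ * -(t ^ 2)⁻¹| = K⁻¹ * (t ^ 2)⁻¹ from by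
      rw [abs_mul, abs_neg, abs_inv, abs_inv, abs_of_pos hKpos,
        abs_of_pos (by positivity : (0:ℝ) < t ^ 2)]]
    rw [Complex.real_smul]
    rw [show ((K⁻¹ * (t ^ 2)⁻¹ : ℝ) : ℂ) =
        ((N : ℂ) * (D : ℂ) ^ 2)⁻¹ * (-((Complex.I * (t : ℂ)) ^ 2))⁻¹ from by
      push_cast [hKdef]
      rw [show (Complex.I * (t : ℂ)) ^ 2 = -(t : ℂ) ^ 2 from by
        rw [mul_pow, Complex.I_sq]; ring, neg_neg]]
    exact scalar_id w n m hn hm (N : ℂ) (D : ℂ) (Complex.I * (t : ℂ))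
      (Rq N w (w - n) (Complex.I * t + (v : ℂ) / D)) hNC hDC hIt

end
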